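/- Let a, b, c ≥ 2 with gcd(a,c) = 1, e = gcd(b,c), â = gcd(a,b−1), and suppose ⌊b/c⌋ ≥ a + â. Then there exist positive integers α, β with aβ + eâα = b−1 and c | (b − eâα). -/

import Mathlib

theorem stmt16 (a b c : ℤ) (ha : 2 ≤ a) (hb : 2 ≤ b) (hc : 2 ≤ c)
    (hac : Int.gcd a c = 1)
    (e : ℤ) (he : e = (Int.gcd b c : ℤ))
    (ahat : ℤ) (hahat : ahat = (Int.gcd a (b - 1) : ℤ))
    (hfloor : a + ahat ≤ b / c) :
    ∃ α β : ℤ, 0 < α ∧ 0 < β ∧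
      a * β + e * ahat * α = b - 1 ∧ c ∣ b - e * ahat * α := by
  have hcpos : (0 : ℤ) < c := by linarith
  have hcne : c ≠ 0 := ne_of_gt hcpos
  -- basic divisibilities
  have he_b : e ∣ b := he ▸ Int.gcd_dvd_left b c
  have he_c : e ∣ c := he ▸ Int.gcd_dvd_right b c
  have hahat_a : ahat ∣ a := hahat ▸ Int.gcd_dvd_left a (b - 1)
  have hahat_b1 : ahat ∣ b - 1 := hahat ▸ Int.gcd_dvd_right a (b - 1)
  have hahat_pos : 0 < ahat := by
    rw [hahat]
    exact_mod_cast Int.gcd_pos_of_ne_zero_left (b - 1) (by omega : a ≠ 0)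
  have he_pos : 0 < e := by
    rw [he]
    exact_mod_cast Int.gcd_pos_of_ne_zero_left c (by omega : b ≠ 0)
  -- coprimality of a and c
  have hcop : IsCoprime a c := Int.isCoprime_iff_gcd_eq_one.mpr hac
  -- coprimality of e and ahat
  have hcop2 : IsCoprime e ahat :=
    ((hcop.symm.of_isCoprime_of_dvd_left he_c).of_isCoprime_of_dvd_right hahat_a)
  -- choose β with c ∣ a*β + 1, 0 < β < c
  obtain ⟨u, v, huv⟩ := hcop
  set β : ℤ := (-u) % c with hβdef
  have hβ0 : 0 ≤ β := Int.emod_nonneg _ hcne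
  have hβlt : β < c := Int.emod_lt_of_pos _ hcpos
  have hkey : c ∣ a * β + 1 := by
    have hmd := Int.emod_add_mul_ediv (-u) c
    have h1 : β = -u - c * ((-u) / c) := by rw [hβdef]; linarith
    have h3 : a * (-u) + 1 = v * c := by linear_combination -huv
    have : a * β + 1 = v * c - a * (c * ((-u) / c)) := by rw [h1]; linear_combination h3
    rw [this]
    exact dvd_sub ⟨v, by ring⟩ ⟨a * ((-u) / c), by ring⟩
  have hβpos : 0 < β := by
    rcases lt_or_eq_of_le hβ0 with h | h
    · exact h
    · exfalso
      have : c ∣ 1 := by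
        have := hkey
        rw [← h] at this
        simpa using this
      have := Int.le_of_dvd one_pos this
      omega
  -- divisibility e*ahat ∣ b - 1 - a*β
  have hdvd_e : e ∣ b - 1 - a * β := by
    have h1 : e ∣ a * β + 1 := dvd_trans he_c hkey
    have : b - 1 - a * β = b - (a * β + 1) := by ring
    rw [this]
    exact dvd_sub he_b h1
  have hdvd_ahat : ahat ∣ b - 1 - a * β := by
    exact dvd_sub hahat_b1 (Dvd.dvd.mul_right hahat_a β)
  have hdvd : e * ahat ∣ b - 1 - a * β := hcop2.mul_dvd hdvd_e hdvd_ahat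
  obtain ⟨α, hα⟩ := hdvd
  -- from hfloor : (a + ahat) * c ≤ b
  have hbc : (a + ahat) * c ≤ b := by
    have := (Int.le_ediv_iff_mul_le hcpos).mp hfloor
    linarith
  -- positivity of α
  have hsub_pos : 0 < b - 1 - a * β := by
    have h1 : a * β ≤ a * (c - 1) := by
      apply mul_le_mul_of_nonneg_left _ (by linarith : (0:ℤ) ≤ a)
      omega
    nlinarith [hahat_pos, hcpos]
  have hαpos : 0 < α := by
    by_contra h
    push_neg at h
    have : e * ahat * α ≤ 0 := mul_nonpos_of_nonneg_of_nonpos (by positivity) h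
    omega
  refine ⟨α, β, hαpos, hβpos, ?_, ?_⟩
  · linarith [hα]
  · have : b - e * ahat * α = a * β + 1 := by linarith [hα]
    rw [this]
    exact hkey
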